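/- Let (K,v) be a valued field, {a_ρ}_{ρ<κ} a pseudo-convergent sequence of algebraic type with no pseudo-limit in K, P a monic polynomial of minimal degree such that v(P(a_ρ)) is ultimately strictly increasing, and a_∞ a root of P in an algebraic closure. Then there is a valuation v' on K(a_∞) extending v such that (K(a_∞), v') is an immediate extension of (K,v) and a_∞ is a pseudo-limit of {a_ρ}. -/

import Mathlib

open Polynomial

section KapAux

open Finset

namespace Kap

variable {K : Type} [Field K] {Γ : Type} [LinearOrderedCommGroupWithZero Γ]
  {ι : Type} [LinearOrder ι]

/-- The eventual value of `v (Q (a ρ))`. -/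
def EvVal (v : Valuation K Γ) (a : ι → K) (Q : K[X]) (c : Γ) : Prop :=
  ∃ ρ₀, ∀ ρ, ρ₀ ≤ ρ → v (Q.eval (a ρ)) = c

variable (v : Valuation K Γ) (a : ι → K)

theorem evVal_unique {Q c c'} (h : EvVal v a Q c) (h' : EvVal v a Q c') : c = c' := by
  obtain ⟨ρ₀, h⟩ := h; obtain ⟨ρ₀', h'⟩ := h'
  rw [← h (max ρ₀ ρ₀') (le_max_left _ _), h' (max ρ₀ ρ₀') (le_max_right _ _)]

theorem evVal_mul {Q R c d} (h : EvVal v a Q c) (h' : EvVal v a R d) :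
    EvVal v a (Q * R) (c * d) := by
  obtain ⟨ρ₀, h⟩ := h; obtain ⟨ρ₀', h'⟩ := h'
  exact ⟨max ρ₀ ρ₀', fun ρ hρ => by
    rw [eval_mul, map_mul, h ρ (le_trans (le_max_left _ _) hρ),
      h' ρ (le_trans (le_max_right _ _) hρ)]⟩

/-- The gauge `γ ρ = v (a σ - a ρ)` for any `σ > ρ`. -/
noncomputable def gauge (hnomax : ∀ ρ : ι, ∃ σ, ρ < σ) (ρ : ι) : Γ :=
  v (a (hnomax ρ).choose - a ρ)

variable {v a}

theorem gauge_spec (hpc : ∀ α β γ, α < β → β < γ → v (a γ - a β) < v (a β - a α))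
    (hnomax : ∀ ρ : ι, ∃ σ, ρ < σ) {ρ σ : ι} (h : ρ < σ) : v (a σ - a ρ) = gauge v a hnomax ρ := by
  have key : ∀ τ τ' : ι, ρ < τ → τ < τ' → v (a τ' - a ρ) = v (a τ - a ρ) := by
    intro τ τ' h1 h2
    have e : a τ' - a ρ = (a τ' - a τ) + (a τ - a ρ) := by ring
    rw [e, Valuation.map_add_eq_of_lt_right _ (hpc ρ τ τ' h1 h2)]
  have hσ₀ := (hnomax ρ).choose_spec
  rcases lt_trichotomy σ (hnomax ρ).choose with hlt | heq | hgt
  · exact (key σ _ h hlt).symm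
  · rw [heq]; rfl
  · exact key _ σ hσ₀ hgt

theorem gauge_lt (hpc : ∀ α β γ, α < β → β < γ → v (a γ - a β) < v (a β - a α))
    (hnomax : ∀ ρ : ι, ∃ σ, ρ < σ) {ρ σ : ι} (h : ρ < σ) :
    gauge v a hnomax σ < gauge v a hnomax ρ := by
  have hσ' := (hnomax σ).choose_spec
  have := hpc ρ σ _ h hσ'
  rwa [gauge_spec hpc hnomax h] at this

theorem gauge_ne_zero (hpc : ∀ α β γ, α < β → β < γ → v (a γ - a β) < v (a β - a α))
    (hnomax : ∀ ρ : ι, ∃ σ, ρ < σ) (ρ : ι) : gauge v a hnomax ρ ≠ 0 := by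
  intro h0
  have := gauge_lt hpc hnomax (hnomax ρ).choose_spec
  rw [h0] at this
  exact lt_irrefl _ (lt_of_lt_of_le this (zero_le' (a := gauge v a hnomax (hnomax ρ).choose)))

theorem a_ne (hpc : ∀ α β γ, α < β → β < γ → v (a γ - a β) < v (a β - a α))
    (hnomax : ∀ ρ : ι, ∃ σ, ρ < σ) {ρ σ : ι} (h : ρ < σ) : a σ ≠ a ρ := by
  intro heq
  obtain ⟨τ, hτ⟩ := hnomax σ
  have := hpc ρ σ τ h hτ
  rw [heq, sub_self, map_zero] at this
  exact lt_irrefl _ (lt_of_lt_of_le this (zero_le' (a := v (a τ - a ρ))))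

theorem exists_eval_ne (hpc : ∀ α β γ, α < β → β < γ → v (a γ - a β) < v (a β - a α))
    (hnomax : ∀ ρ : ι, ∃ σ, ρ < σ) {Q : K[X]} (hQ : Q ≠ 0) (ρ₀ : ι) :
    ∃ ρ, ρ₀ ≤ ρ ∧ Q.eval (a ρ) ≠ 0 := by
  by_contra hcon
  push_neg at hcon
  let f : ℕ → ι := fun k => Nat.recAux ρ₀ (fun _ p => (hnomax p).choose) k
  have hf : StrictMono f := strictMono_nat_of_lt_succ fun k => (hnomax (f k)).choose_spec
  have hf0 : ∀ k, ρ₀ ≤ f k := by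
    intro k
    induction k with
    | zero => exact le_refl _
    | succ k ih => exact ih.trans (hf (Nat.lt_succ_self k)).le
  have hinj : Function.Injective (fun i : Fin (Q.natDegree + 1) => a (f i)) := by
    intro i j hij
    by_contra hne
    have hne' : (i : ℕ) ≠ (j : ℕ) := fun h => hne (Fin.ext h)
    rcases hne'.lt_or_gt with h | h
    · exact a_ne hpc hnomax (hf h) hij.symm
    · exact a_ne hpc hnomax (hf h) hij
  have := Polynomial.eq_zero_of_natDegree_lt_card_of_eval_eq_zero Q hinj
    (fun i => hcon (f i) (hf0 i)) (by simp)
  exact hQ this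


theorem taylor_expand (x y : K) (Q : K[X]) :
    Q.eval y - Q.eval x =
      ∑ i ∈ Finset.range Q.natDegree,
        (hasseDeriv (i + 1) Q).eval x * (y - x) ^ (i + 1) := by
  conv_lhs => rw [← taylor_eval_sub x Q y]
  rw [eval_eq_sum_range, natDegree_taylor, Finset.sum_range_succ']
  simp only [taylor_coeff, pow_zero, mul_one, hasseDeriv_zero, LinearMap.id_coe, id_eq]
  rw [add_sub_cancel_right]

/-- Key lemma: eventual value of `v (Q (a σ) - Q (a ρ))` is a strictly
decreasing nonzero function of `ρ`. -/
theorem key_taylor (hpc : ∀ α β γ, α < β → β < γ → v (a γ - a β) < v (a β - a α))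
    (hnomax : ∀ ρ : ι, ∃ σ, ρ < σ) (hι : Nonempty ι) {Q : K[X]} (hm : 1 ≤ Q.natDegree)
    (hder : ∀ i, 1 ≤ i → i ≤ Q.natDegree → hasseDeriv i Q ≠ 0 →
      ∃ c, c ≠ 0 ∧ EvVal v a (hasseDeriv i Q) c) :
    ∃ (M : ι → Γ) (ρ₀ : ι),
      (∀ ρ σ, ρ₀ ≤ ρ → ρ < σ → v (Q.eval (a σ) - Q.eval (a ρ)) = M ρ) ∧
      (∀ ρ σ, ρ < σ → M σ < M ρ) ∧ (∀ ρ, M ρ ≠ 0) := by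
  classical
  haveI := hι
  have hQ0 : Q ≠ 0 := fun h => by simp [h] at hm
  set m := Q.natDegree with hmdef
  set S : Finset ℕ := (Finset.Icc 1 m).filter (fun i => hasseDeriv i Q ≠ 0) with hSdef
  have hmemS : ∀ i, i ∈ S ↔ (1 ≤ i ∧ i ≤ m ∧ hasseDeriv i Q ≠ 0) := by
    intro i
    simp [hSdef, Finset.mem_filter, Finset.mem_Icc, and_assoc]
  have hmS : m ∈ S := by
    rw [hmemS]
    refine ⟨hm, le_refl m, fun h0 => ?_⟩
    have hc : (hasseDeriv m Q).coeff 0 = Q.coeff m := by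
      rw [hasseDeriv_coeff]
      simp
    rw [h0] at hc
    simp only [coeff_zero] at hc
    exact (Polynomial.leadingCoeff_ne_zero.mpr hQ0) (by rw [Polynomial.leadingCoeff, ← hmdef, ← hc])
  have hSne : S.Nonempty := ⟨m, hmS⟩
  have hder' : ∀ i : ℕ, ∃ c : Γ, i ∈ S → (c ≠ 0 ∧ EvVal v a (hasseDeriv i Q) c) := by
    intro i
    by_cases h : i ∈ S
    · obtain ⟨h1, h2, h3⟩ := (hmemS i).mp h
      obtain ⟨c, hc⟩ := hder i h1 h2 h3
      exact ⟨c, fun _ => hc⟩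
    · exact ⟨1, fun h' => absurd h' h⟩
  choose c hc using hder'
  have htail : ∀ i : ℕ, ∃ τ : ι, ∀ ρ, τ ≤ ρ → i ∈ S →
      v ((hasseDeriv i Q).eval (a ρ)) = c i := by
    intro i
    by_cases h : i ∈ S
    · obtain ⟨τ, hτ⟩ := (hc i h).2
      exact ⟨τ, fun ρ hρ _ => hτ ρ hρ⟩
    · exact ⟨hι.some, fun ρ _ h' => absurd h' h⟩
  choose t ht using htail
  set γ : ι → Γ := gauge v a hnomax with hγdef
  have hγ0 : ∀ ρ, γ ρ ≠ 0 := gauge_ne_zero hpc hnomax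
  have hγlt : ∀ {ρ σ}, ρ < σ → γ σ < γ ρ := fun h => gauge_lt hpc hnomax h
  have huniq : ∀ i ∈ S, ∀ j ∈ S, i < j → ∀ ρ σ : ι, ρ < σ →
      c i * γ ρ ^ i = c j * γ ρ ^ j → c i * γ σ ^ i = c j * γ σ ^ j → False := by
    intro i hi j hj hij ρ σ hρσ h1 h2
    have hci : c i ≠ 0 := (hc i hi).1
    have hcj : c j ≠ 0 := (hc j hj).1
    have e1 : c i = c j * γ ρ ^ (j - i) := by
      apply mul_right_cancel₀ (pow_ne_zero i (hγ0 ρ))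
      rw [h1, mul_assoc, ← pow_add, Nat.sub_add_cancel hij.le]
    have e2 : c i = c j * γ σ ^ (j - i) := by
      apply mul_right_cancel₀ (pow_ne_zero i (hγ0 σ))
      rw [h2, mul_assoc, ← pow_add, Nat.sub_add_cancel hij.le]
    have e3 : γ σ ^ (j - i) = γ ρ ^ (j - i) :=
      mul_left_cancel₀ hcj (e2.symm.trans e1)
    have : γ σ ^ (j - i) < γ ρ ^ (j - i) :=
      pow_lt_pow_left₀ (hγlt hρσ) zero_le' (by omega)
    exact this.ne e3
  have hcross : ∀ i j : ℕ, ∃ ρc : ι, ∀ ρ, ρc < ρ → i ∈ S → j ∈ S → i < j →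
      c i * γ ρ ^ i ≠ c j * γ ρ ^ j := by
    intro i j
    by_cases hij : i ∈ S ∧ j ∈ S ∧ i < j
    · by_cases hex : ∃ ρ : ι, c i * γ ρ ^ i = c j * γ ρ ^ j
      · obtain ⟨ρc, hρc⟩ := hex
        exact ⟨ρc, fun ρ hρ _ _ _ heq =>
          huniq i hij.1 j hij.2.1 hij.2.2 ρc ρ hρ hρc heq⟩
      · exact ⟨hι.some, fun ρ _ _ _ _ heq => hex ⟨ρ, heq⟩⟩
    · exact ⟨hι.some, fun ρ _ h1 h2 h3 => absurd ⟨h1, h2, h3⟩ hij⟩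
  choose cr hcr using hcross
  obtain ⟨ρb, hρb⟩ := Finset.exists_le ((S.image t) ∪ ((S ×ˢ S).image fun p => cr p.1 p.2))
  obtain ⟨ρ₀, hρ₀⟩ := hnomax ρb
  have htle : ∀ i ∈ S, ∀ ρ, ρ₀ ≤ ρ → t i ≤ ρ := by
    intro i hi ρ hρ
    have : t i ≤ ρb := hρb _ (Finset.mem_union_left _ (Finset.mem_image_of_mem t hi))
    exact this.trans (hρ₀.le.trans hρ)
  have hcrle : ∀ i ∈ S, ∀ j ∈ S, ∀ ρ, ρ₀ ≤ ρ → cr i j < ρ := by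
    intro i hi j hj ρ hρ
    have hmem : (i, j) ∈ S ×ˢ S := Finset.mem_product.mpr ⟨hi, hj⟩
    have : cr i j ≤ ρb := hρb _ (Finset.mem_union_right _
      (Finset.mem_image.mpr ⟨(i, j), hmem, rfl⟩))
    exact lt_of_le_of_lt this (lt_of_lt_of_le hρ₀ hρ)
  have hdist : ∀ ρ, ρ₀ ≤ ρ → ∀ i ∈ S, ∀ j ∈ S, i ≠ j →
      c i * γ ρ ^ i ≠ c j * γ ρ ^ j := by
    intro ρ hρ i hi j hj hij
    rcases hij.lt_or_gt with h | h
    · exact hcr i j ρ (hcrle i hi j hj ρ hρ) hi hj h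
    · exact fun heq => hcr j i ρ (hcrle j hj i hi ρ hρ) hj hi h heq.symm
  set M : ι → Γ := fun ρ => S.sup' hSne (fun i => c i * γ ρ ^ i) with hMdef
  have hMattain : ∀ ρ : ι, ∃ i ∈ S, M ρ = c i * γ ρ ^ i := by
    intro ρ
    obtain ⟨i, hi, hieq⟩ := Finset.exists_mem_eq_sup' hSne (fun i => c i * γ ρ ^ i)
    exact ⟨i, hi, hieq⟩
  have hMne : ∀ ρ, M ρ ≠ 0 := by
    intro ρ
    obtain ⟨i, hi, hieq⟩ := hMattain ρ
    rw [hieq]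
    exact mul_ne_zero (hc i hi).1 (pow_ne_zero _ (hγ0 ρ))
  have hMdec : ∀ ρ σ : ι, ρ < σ → M σ < M ρ := by
    intro ρ σ h
    apply (Finset.sup'_lt_iff hSne).mpr
    intro i hi
    have h1 : 1 ≤ i := ((hmemS i).mp hi).1
    calc c i * γ σ ^ i < c i * γ ρ ^ i :=
          mul_lt_mul_of_pos_left
            (pow_lt_pow_left₀ (hγlt h) zero_le' (by omega)) (zero_lt_iff.mpr (hc i hi).1)
      _ ≤ M ρ := by simp only [hMdef]; exact Finset.le_sup' (fun j => c j * γ ρ ^ j) hi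
  refine ⟨M, ρ₀, ?_, hMdec, hMne⟩
  intro ρ σ hρ hσ
  rw [taylor_expand]
  obtain ⟨i₀, hi₀S, hi₀⟩ := hMattain ρ
  obtain ⟨hi₀1, hi₀m, -⟩ := (hmemS i₀).mp hi₀S
  have hterm : ∀ i ∈ S, v ((hasseDeriv i Q).eval (a ρ) * (a σ - a ρ) ^ i) = c i * γ ρ ^ i := by
    intro i hi
    rw [map_mul, map_pow, gauge_spec hpc hnomax hσ, ht i ρ (htle i hi ρ hρ) hi]
  have hj : i₀ - 1 ∈ Finset.range m := Finset.mem_range.mpr (by omega)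
  have hsub : i₀ - 1 + 1 = i₀ := by omega
  rw [v.map_sum_eq_of_lt hj (f := fun i => (hasseDeriv (i + 1) Q).eval (a ρ) * (a σ - a ρ) ^ (i + 1))]
  · rw [hsub, hterm i₀ hi₀S, hi₀]
  · intro i hi
    simp only [Finset.mem_sdiff, Finset.mem_singleton, Finset.mem_range] at hi
    obtain ⟨hir, hine⟩ := hi
    rw [hsub, hterm i₀ hi₀S, ← hi₀]
    have hii : i + 1 ≠ i₀ := by omega
    by_cases hiS : hasseDeriv (i + 1) Q = 0
    · rw [hiS]
      simp only [eval_zero, zero_mul, map_zero]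
      exact zero_lt_iff.mpr (hMne ρ)
    · have hmem : i + 1 ∈ S := (hmemS (i + 1)).mpr
        ⟨by omega, by omega, hiS⟩
      rw [hterm (i + 1) hmem]
      have hle : c (i + 1) * γ ρ ^ (i + 1) ≤ M ρ := by
        simp only [hMdef]; exact Finset.le_sup' (fun j => c j * γ ρ ^ j) hmem
      have hne2 : c (i + 1) * γ ρ ^ (i + 1) ≠ M ρ := by
        rw [hi₀]; exact hdist ρ hρ (i + 1) hmem i₀ hi₀S hii
      exact lt_of_le_of_ne hle hne2


/-- Eventual constancy of `v (Q (a ρ))` for `Q` of degree less than `n`. -/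
theorem evconst (hpc : ∀ α β γ, α < β → β < γ → v (a γ - a β) < v (a β - a α))
    (hnomax : ∀ ρ : ι, ∃ σ, ρ < σ) (hι : Nonempty ι) (n : ℕ)
    (hmin : ∀ Q : K[X], Q ≠ 0 → Q.natDegree < n →
      ¬ ∃ ρ₀, ∀ ρ σ, ρ₀ ≤ ρ → ρ < σ → v (Q.eval (a σ)) < v (Q.eval (a ρ))) :
    ∀ Q : K[X], Q ≠ 0 → Q.natDegree < n → ∃ c, c ≠ 0 ∧ EvVal v a Q c := by
  suffices H : ∀ m : ℕ, ∀ Q : K[X], Q.natDegree ≤ m → Q ≠ 0 → Q.natDegree < n →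
      ∃ c, c ≠ 0 ∧ EvVal v a Q c by
    exact fun Q hQ hd => H Q.natDegree Q le_rfl hQ hd
  intro m
  induction m with
  | zero =>
    intro Q hd hQ _
    obtain ⟨x, hx⟩ := Polynomial.natDegree_eq_zero.mp (Nat.le_zero.mp hd)
    have hx0 : x ≠ 0 := fun h => hQ (by rw [← hx, h, map_zero])
    exact ⟨v x, (Valuation.ne_zero_iff v).mpr hx0,
      ⟨hι.some, fun ρ _ => by rw [← hx, eval_C]⟩⟩
  | succ m IH =>
    intro Q hd hQ hdeg
    by_cases hd0 : Q.natDegree ≤ m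
    · exact IH Q hd0 hQ hdeg
    have hQm : Q.natDegree = m + 1 := by omega
    have hm1 : 1 ≤ Q.natDegree := by omega
    obtain ⟨M, ρ₀, hM, hMdec, hMne⟩ := key_taylor hpc hnomax hι hm1
      (fun i hi1 him hne => IH (hasseDeriv i Q)
        (le_trans (natDegree_hasseDeriv_le _ _) (by omega)) hne
        (lt_of_le_of_lt (le_trans (natDegree_hasseDeriv_le _ _) (by omega)) hdeg))
    have hmin' := hmin Q hQ hdeg
    push_neg at hmin'
    obtain ⟨ρs, σs, hρs, hσs, hle⟩ := hmin' ρ₀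
    have hex : ∃ ρ₁, ρ₀ ≤ ρ₁ ∧ v (Q.eval (a ρ₁)) ≠ M ρ₁ := by
      by_contra h
      push_neg at h
      have h1 := h ρs hρs
      have h2 := h σs (hρs.trans hσs.le)
      rw [h1, h2] at hle
      exact lt_irrefl _ (lt_of_le_of_lt hle (hMdec ρs σs hσs))
    obtain ⟨ρ₁, hρ₁, hne⟩ := hex
    obtain ⟨ρ₂, hρ₂⟩ := hnomax ρ₁
    have hval : ∀ σ, ρ₁ < σ → v (Q.eval (a σ)) = max (v (Q.eval (a ρ₁))) (M ρ₁) := by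
      intro σ hσ
      have e : Q.eval (a σ) = Q.eval (a ρ₁) + (Q.eval (a σ) - Q.eval (a ρ₁)) := by ring
      rw [e, Valuation.map_add_of_distinct_val, hM ρ₁ σ hρ₁ hσ]
      rw [hM ρ₁ σ hρ₁ hσ]
      exact hne
    refine ⟨max (v (Q.eval (a ρ₁))) (M ρ₁), ?_,
      ⟨ρ₂, fun ρ hρ => hval ρ (hρ₂.trans_le hρ)⟩⟩
    intro h0
    have : M ρ₁ ≤ 0 := h0 ▸ le_max_right _ _
    exact (hMne ρ₁) (le_antisymm this zero_le')


end Kap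

end KapAux

/-- Kaplansky's Theorem 3: if `{a ρ}` is a pseudo-convergent sequence of
algebraic type with no pseudo-limit in `K`, `P` is a monic polynomial of
minimal degree whose values `v (P (a ρ))` are ultimately strictly increasing
(additively; `StrictAnti`-like multiplicatively), and `aInf` generates a field
extension `L = K(aInf)` with `P(aInf) = 0`, then there is a valuation `w` on `L`
extending `v` making `(L, w)/(K, v)` an immediate extension, with `aInf` a
pseudo-limit of `{a ρ}`. -/
theorem kaplansky_algebraic_type_immediate_extension
    (K : Type) [Field K]
    {Γ : Type} [LinearOrderedCommGroupWithZero Γ] (v : Valuation K Γ)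
    {ι : Type} [LinearOrder ι] (a : ι → K)
    (hpc : ∀ α β γ, α < β → β < γ → v (a γ - a β) < v (a β - a α))
    (hnolim : ∀ l : K, ¬ ∃ ρ₀, ∀ ρ σ, ρ₀ ≤ ρ → ρ < σ → v (l - a σ) < v (l - a ρ))
    (P : K[X]) (hmonic : P.Monic)
    (hP : ∃ ρ₀, ∀ ρ σ, ρ₀ ≤ ρ → ρ < σ → v (P.eval (a σ)) < v (P.eval (a ρ)))
    (hmin : ∀ Q : K[X], Q ≠ 0 → Q.natDegree < P.natDegree →
      ¬ ∃ ρ₀, ∀ ρ σ, ρ₀ ≤ ρ → ρ < σ → v (Q.eval (a σ)) < v (Q.eval (a ρ)))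
    (L : Type) [Field L] [Algebra K L] (aInf : L)
    (hgen : Algebra.adjoin K {aInf} = ⊤) (hroot : Polynomial.aeval aInf P = 0) :
    ∃ w : Valuation L Γ,
      (∀ x : K, w (algebraMap K L x) = v x) ∧
      (∀ y : L, y ≠ 0 → ∃ x : K, w y = v x) ∧
      (∀ y : L, w y ≤ 1 → ∃ x : K, v x ≤ 1 ∧ w (y - algebraMap K L x) < 1) ∧
      (∀ ρ σ, ρ < σ → w (aInf - algebraMap K L (a σ)) < w (aInf - algebraMap K L (a ρ))) := by

  classical
  obtain ⟨ρP, hρP⟩ := hP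
  have hι : Nonempty ι := ⟨ρP⟩
  have hnomax : ∀ ρ : ι, ∃ σ, ρ < σ := by
    intro ρ
    by_contra h
    push_neg at h
    exact hnolim 0 ⟨ρ, fun ρ' σ' hρ' hσ' =>
      absurd (hσ'.trans_le ((h σ').trans hρ')) (lt_irrefl _)⟩
  have hP0 : P ≠ 0 := hmonic.ne_zero
  have hn1 : 1 ≤ P.natDegree := by
    by_contra h
    have h0 : P.natDegree = 0 := by omega
    have h1 : P = 1 := hmonic.natDegree_eq_zero.mp h0
    rw [h1, map_one] at hroot
    exact one_ne_zero hroot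
  have hPn1 : P ≠ 1 := fun h => by
    rw [h, map_one] at hroot; exact one_ne_zero hroot
  have evc : ∀ Q : K[X], Q ≠ 0 → Q.natDegree < P.natDegree →
      ∃ c, c ≠ 0 ∧ Kap.EvVal v a Q c :=
    Kap.evconst hpc hnomax hι P.natDegree hmin
  have hn2 : 2 ≤ P.natDegree := by
    by_contra h
    have h1 : P.natDegree = 1 := by omega
    have hPX : P = X + C (P.coeff 0) := hmonic.eq_X_add_C h1
    apply hnolim (-(P.coeff 0))
    refine ⟨ρP, fun ρ σ hρ hσ => ?_⟩
    have h2 := hρP ρ σ hρ hσ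
    rw [hPX] at h2
    simp only [eval_add, eval_X, eval_C] at h2
    have e : ∀ x : K, -P.coeff 0 - x = -(x + P.coeff 0) := fun x => by ring
    rw [e, e, v.map_neg, v.map_neg]
    exact h2
  have hirr : Irreducible P := by
    constructor
    · intro hu
      exact hPn1 (hmonic.natDegree_eq_zero.mp (natDegree_eq_zero_of_isUnit hu))
    · intro A B hAB
      by_contra hcon
      push_neg at hcon
      obtain ⟨hA, hB⟩ := hcon
      have hA0 : A ≠ 0 := fun h => hP0 (by rw [hAB, h, zero_mul])
      have hB0 : B ≠ 0 := fun h => hP0 (by rw [hAB, h, mul_zero])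
      have hdA : 1 ≤ A.natDegree := by
        rcases Nat.eq_zero_or_pos A.natDegree with h | h
        · obtain ⟨x, hx⟩ := Polynomial.natDegree_eq_zero.mp h
          exact absurd (hx ▸ isUnit_C.mpr (isUnit_iff_ne_zero.mpr
            (fun h0 => hA0 (by rw [← hx, h0, map_zero])))) hA
        · exact h
      have hdB : 1 ≤ B.natDegree := by
        rcases Nat.eq_zero_or_pos B.natDegree with h | h
        · obtain ⟨x, hx⟩ := Polynomial.natDegree_eq_zero.mp h
          exact absurd (hx ▸ isUnit_C.mpr (isUnit_iff_ne_zero.mpr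
            (fun h0 => hB0 (by rw [← hx, h0, map_zero])))) hB
        · exact h
      have hsum : A.natDegree + B.natDegree = P.natDegree := by
        rw [hAB, natDegree_mul hA0 hB0]
      obtain ⟨cA, hcA0, hcA⟩ := evc A hA0 (by omega)
      obtain ⟨cB, hcB0, hcB⟩ := evc B hB0 (by omega)
      obtain ⟨ρ₁, hρ₁⟩ := Kap.evVal_mul v a hcA hcB
      obtain ⟨σ₂, hσ₂⟩ := hnomax (max ρ₁ ρP)
      have h1 := hρP (max ρ₁ ρP) σ₂ (le_max_right _ _) hσ₂
      rw [hAB] at h1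
      rw [hρ₁ (max ρ₁ ρP) (le_max_left _ _),
        hρ₁ σ₂ ((le_max_left _ _).trans hσ₂.le)] at h1
      exact lt_irrefl _ h1
  have hminP : minpoly K aInf = P := (minpoly.eq_of_irreducible_of_monic (A := K) (B := L) hirr hroot hmonic).symm
  have hsurj : ∀ y : L, ∃ Q : K[X], Q.natDegree < P.natDegree ∧ aeval aInf Q = y := by
    intro y
    have hy : y ∈ (Polynomial.aeval (R := K) aInf).range := by
      rw [← Algebra.adjoin_singleton_eq_range_aeval, hgen]
      exact Algebra.mem_top
    obtain ⟨R, hR⟩ := hy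
    refine ⟨R %ₘ P, natDegree_modByMonic_lt R hmonic hPn1, ?_⟩
    have hdiv := Polynomial.modByMonic_add_div R P
    calc aeval aInf (R %ₘ P)
        = aeval aInf (R %ₘ P) + aeval aInf P * aeval aInf (R /ₘ P) := by
          rw [hroot, zero_mul, add_zero]
      _ = aeval aInf (R %ₘ P + P * (R /ₘ P)) := by rw [map_add, map_mul]
      _ = y := by rw [hdiv]; exact hR
  have huniq : ∀ Q₁ Q₂ : K[X], Q₁.natDegree < P.natDegree → Q₂.natDegree < P.natDegree →
      aeval aInf Q₁ = aeval aInf Q₂ → Q₁ = Q₂ := by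
    intro Q₁ Q₂ h1 h2 h
    by_contra hne
    have hdvd : minpoly K aInf ∣ Q₁ - Q₂ := minpoly.dvd K aInf (by rw [map_sub, h, sub_self])
    rw [hminP] at hdvd
    have h3 := Polynomial.natDegree_le_of_dvd hdvd (sub_ne_zero.mpr hne)
    have h4 : (Q₁ - Q₂).natDegree < P.natDegree :=
      lt_of_le_of_lt (Polynomial.natDegree_sub_le Q₁ Q₂) (max_lt h1 h2)
    omega
  choose rep hrepdeg hrepval using hsurj
  have evc' : ∀ Q : K[X], Q.natDegree < P.natDegree →
      ∃ c, Kap.EvVal v a Q c ∧ (Q ≠ 0 → c ≠ 0) := by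
    intro Q hQ
    by_cases h : Q = 0
    · exact ⟨0, ⟨ρP, fun ρ _ => by rw [h, eval_zero, map_zero]⟩, fun h' => absurd h h'⟩
    · obtain ⟨c, hc0, hc⟩ := evc Q h hQ
      exact ⟨c, hc, fun _ => hc0⟩
  set cval : K[X] → Γ :=
    fun Q => if h : Q.natDegree < P.natDegree then (evc' Q h).choose else 0 with hcval
  have hcv : ∀ Q (h : Q.natDegree < P.natDegree), Kap.EvVal v a Q (cval Q) := by
    intro Q h
    rw [hcval]
    simp only [dif_pos h]
    exact (evc' Q h).choose_spec.1
  set wf : L → Γ := fun y => cval (rep y) with hwf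
  have wf_ev : ∀ y : L, Kap.EvVal v a (rep y) (wf y) := fun y => hcv (rep y) (hrepdeg y)
  have wf_unique : ∀ (y : L) (Q : K[X]) (c : Γ), Q.natDegree < P.natDegree →
      aeval aInf Q = y → Kap.EvVal v a Q c → wf y = c := by
    intro y Q c hQ hy hev
    have hrq : rep y = Q := huniq _ _ (hrepdeg y) hQ (by rw [hrepval y, hy])
    have h2 : Kap.EvVal v a Q (wf y) := by rw [← hrq]; exact wf_ev y
    exact Kap.evVal_unique v a h2 hev
  have hzero : wf 0 = 0 :=
    wf_unique 0 0 0 (by rw [natDegree_zero]; omega) (map_zero _)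
      ⟨ρP, fun ρ _ => by rw [eval_zero, map_zero]⟩
  have hone : wf 1 = 1 :=
    wf_unique 1 1 1 (by rw [natDegree_one]; omega) (map_one _)
      ⟨ρP, fun ρ _ => by rw [eval_one, map_one]⟩
  have halg : ∀ x : K, wf (algebraMap K L x) = v x := fun x =>
    wf_unique _ (C x) (v x) (by rw [natDegree_C]; omega) (aeval_C _ _)
      ⟨ρP, fun ρ _ => by rw [eval_C]⟩
  have hadd : ∀ y z : L, wf (y + z) ≤ max (wf y) (wf z) := by
    intro y z
    have hQ : (rep y + rep z).natDegree < P.natDegree :=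
      lt_of_le_of_lt (natDegree_add_le _ _) (max_lt (hrepdeg y) (hrepdeg z))
    have hev : Kap.EvVal v a (rep y + rep z) (wf (y + z)) := by
      have hrq : rep (y + z) = rep y + rep z :=
        huniq _ _ (hrepdeg (y + z)) hQ (by rw [hrepval, map_add, hrepval, hrepval])
      rw [← hrq]; exact wf_ev (y + z)
    obtain ⟨ρa, ha⟩ := hev
    obtain ⟨ρb, hb⟩ := wf_ev y
    obtain ⟨ρc, hc⟩ := wf_ev z
    rw [← ha (max ρa (max ρb ρc)) (le_max_left _ _),
      ← hb (max ρa (max ρb ρc)) ((le_max_left _ _).trans (le_max_right _ _)),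
      ← hc (max ρa (max ρb ρc)) ((le_max_right _ _).trans (le_max_right _ _)),
      eval_add]
    exact v.map_add _ _
  have hmul : ∀ y z : L, wf (y * z) = wf y * wf z := by
    intro y z
    by_cases hy0 : y = 0
    · rw [hy0, zero_mul, hzero, zero_mul]
    by_cases hz0 : z = 0
    · rw [hz0, mul_zero, hzero, mul_zero]
    have hTdeg : ((rep y * rep z) %ₘ P).natDegree < P.natDegree :=
      natDegree_modByMonic_lt _ hmonic hPn1
    have hTval : aeval aInf ((rep y * rep z) %ₘ P) = y * z := by
      have hdiv := Polynomial.modByMonic_add_div (rep y * rep z) P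
      calc aeval aInf ((rep y * rep z) %ₘ P)
          = aeval aInf ((rep y * rep z) %ₘ P)
            + aeval aInf P * aeval aInf ((rep y * rep z) /ₘ P) := by
            rw [hroot, zero_mul, add_zero]
        _ = aeval aInf ((rep y * rep z) %ₘ P + P * ((rep y * rep z) /ₘ P)) := by
            rw [map_add, map_mul]
        _ = y * z := by rw [hdiv, map_mul, hrepval, hrepval]
    have hT : Kap.EvVal v a ((rep y * rep z) %ₘ P) (wf (y * z)) := by
      have hrq : rep (y * z) = (rep y * rep z) %ₘ P :=
        huniq _ _ (hrepdeg (y * z)) hTdeg (by rw [hrepval, hTval])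
      rw [← hrq]; exact wf_ev (y * z)
    have hq : Kap.EvVal v a (rep y * rep z) (wf y * wf z) :=
      Kap.evVal_mul v a (wf_ev y) (wf_ev z)
    by_cases hSd0 : (rep y * rep z) /ₘ P = 0
    · have he : rep y * rep z = (rep y * rep z) %ₘ P := by
        have hdiv := Polynomial.modByMonic_add_div (rep y * rep z) P
        rw [hSd0, mul_zero, add_zero] at hdiv
        exact hdiv.symm
      exact Kap.evVal_unique v a hT (he ▸ hq)
    · have hy' : rep y ≠ 0 := fun h => hy0 (by rw [← hrepval y, h, map_zero])
      have hz' : rep z ≠ 0 := fun h => hz0 (by rw [← hrepval z, h, map_zero])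
      have hSddeg : ((rep y * rep z) /ₘ P).natDegree < P.natDegree := by
        rw [natDegree_divByMonic _ hmonic, natDegree_mul hy' hz']
        have h1 := hrepdeg y
        have h2 := hrepdeg z
        omega
      obtain ⟨cS, hcS0, hcS⟩ := evc _ hSd0 hSddeg
      by_contra hne
      obtain ⟨ρ1, h1⟩ := hT
      obtain ⟨ρ2, h2⟩ := hq
      obtain ⟨ρ3, h3⟩ := hcS
      have key : ∀ ρ, max (max ρ1 ρ2) (max ρ3 ρP) ≤ ρ →
          v (P.eval (a ρ)) * cS = max (wf y * wf z) (wf (y * z)) := by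
        intro ρ hρ
        have hρ1 : ρ1 ≤ ρ := ((le_max_left _ _).trans (le_max_left _ _)).trans hρ
        have hρ2 : ρ2 ≤ ρ := ((le_max_right _ _).trans (le_max_left _ _)).trans hρ
        have hρ3 : ρ3 ≤ ρ := ((le_max_left _ _).trans (le_max_right _ _)).trans hρ
        have hx : v ((rep y * rep z).eval (a ρ)) = wf y * wf z := h2 ρ hρ2
        have hyv : v (-(((rep y * rep z) %ₘ P).eval (a ρ))) = wf (y * z) := by
          rw [v.map_neg]; exact h1 ρ hρ1
        have hnev : v ((rep y * rep z).eval (a ρ))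
            ≠ v (-(((rep y * rep z) %ₘ P).eval (a ρ))) := by
          rw [hx, hyv]; exact fun h => hne h.symm
        have e1 : v ((rep y * rep z).eval (a ρ) - ((rep y * rep z) %ₘ P).eval (a ρ))
            = max (wf y * wf z) (wf (y * z)) := by
          rw [sub_eq_add_neg, v.map_add_of_distinct_val hnev, hx, hyv]
        have hQQ : rep y * rep z - (rep y * rep z) %ₘ P = P * ((rep y * rep z) /ₘ P) :=
          sub_eq_iff_eq_add'.mpr (Polynomial.modByMonic_add_div (rep y * rep z) P).symm
        calc v (P.eval (a ρ)) * cS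
            = v (P.eval (a ρ)) * v (((rep y * rep z) /ₘ P).eval (a ρ)) := by rw [h3 ρ hρ3]
          _ = v ((P * ((rep y * rep z) /ₘ P)).eval (a ρ)) := by rw [eval_mul, map_mul]
          _ = max (wf y * wf z) (wf (y * z)) := by rw [← hQQ, eval_sub]; exact e1
      obtain ⟨σ4, hσ4⟩ := hnomax (max (max ρ1 ρ2) (max ρ3 ρP))
      have hPle : ρP ≤ max (max ρ1 ρ2) (max ρ3 ρP) :=
        (le_max_right ρ3 ρP).trans (le_max_right _ _)
      have hPlt := hρP _ σ4 hPle hσ4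
      have hlt : v (P.eval (a σ4)) * cS < v (P.eval (a (max (max ρ1 ρ2) (max ρ3 ρP)))) * cS := by
        rw [mul_comm, mul_comm (v (P.eval (a (max (max ρ1 ρ2) (max ρ3 ρP)))))]
        exact mul_lt_mul_of_pos_left hPlt (zero_lt_iff.mpr hcS0)
      rw [key _ le_rfl, key σ4 hσ4.le] at hlt
      exact lt_irrefl _ hlt
  let w : Valuation L Γ := ⟨⟨⟨wf, hzero⟩, hone, hmul⟩, hadd⟩
  have hwy : ∀ y : L, w y = wf y := fun _ => rfl
  refine ⟨w, fun x => by rw [hwy]; exact halg x, ?_, ?_, ?_⟩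
  · intro y hy
    obtain ⟨ρ₀, h⟩ := wf_ev y
    exact ⟨(rep y).eval (a ρ₀), by rw [hwy]; exact (h ρ₀ le_rfl).symm⟩
  · intro y hy1
    rw [hwy] at hy1
    by_cases hd0 : (rep y).natDegree = 0
    · obtain ⟨x, hx⟩ := Polynomial.natDegree_eq_zero.mp hd0
      have hyx : y = algebraMap K L x := by
        rw [← hrepval y, ← hx, aeval_C]
      refine ⟨x, ?_, ?_⟩
      · rw [← halg x, ← hyx]; exact hy1
      · rw [hyx, sub_self, map_zero]
        exact zero_lt_one
    · obtain ⟨M, ρ₀, hM, hMdec, hMne⟩ := Kap.key_taylor hpc hnomax hι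
        (Nat.one_le_iff_ne_zero.mpr hd0)
        (fun i hi1 him hne => evc (hasseDeriv i (rep y)) hne
          (lt_of_le_of_lt (natDegree_hasseDeriv_le _ _)
            (lt_of_le_of_lt (Nat.sub_le _ _) (hrepdeg y))))
      obtain ⟨ρQ, hQev⟩ := wf_ev y
      obtain ⟨ρ₂, hρ₂⟩ := hnomax (max ρ₀ ρQ)
      have hgen' : ∀ ρ', ρ₀ ≤ ρ' →
          w (y - algebraMap K L ((rep y).eval (a ρ'))) = M ρ' := by
        intro ρ' h0
        rw [hwy]
        refine wf_unique _ (rep y - C ((rep y).eval (a ρ'))) _ ?_ ?_ ?_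
        · refine lt_of_le_of_lt (natDegree_sub_le _ _) ?_
          rw [natDegree_C]
          exact max_lt (hrepdeg y) (by omega)
        · rw [map_sub, hrepval, aeval_C]
        · obtain ⟨ρ₃, hρ₃⟩ := hnomax ρ'
          exact ⟨ρ₃, fun ρ hρ => by
            rw [eval_sub, eval_C]
            exact hM ρ' ρ h0 (hρ₃.trans_le hρ)⟩
      have hle1 : ∀ ρ', ρ₀ ≤ ρ' → ρQ ≤ ρ' → M ρ' ≤ 1 := by
        intro ρ' h0 hQ'
        have hx1 : w (algebraMap K L ((rep y).eval (a ρ'))) = wf y := by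
          rw [hwy, halg]; exact hQev ρ' hQ'
        calc M ρ' = w (y - algebraMap K L ((rep y).eval (a ρ'))) := (hgen' ρ' h0).symm
          _ ≤ max (w y) (w (algebraMap K L ((rep y).eval (a ρ')))) := w.map_sub _ _
          _ ≤ 1 := by
            rw [hx1, hwy]
            exact max_le hy1 hy1
      refine ⟨(rep y).eval (a ρ₂), ?_, ?_⟩
      · rw [hQev ρ₂ ((le_max_right _ _).trans hρ₂.le)]
        exact hy1
      · rw [hgen' ρ₂ ((le_max_left _ _).trans hρ₂.le)]
        exact lt_of_lt_of_le (hMdec (max ρ₀ ρQ) ρ₂ hρ₂)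
          (hle1 (max ρ₀ ρQ) (le_max_left _ _) (le_max_right _ _))
  · intro ρ σ hρσ
    have hval : ∀ τ, w (aInf - algebraMap K L (a τ)) = Kap.gauge v a hnomax τ := by
      intro τ
      rw [hwy]
      refine wf_unique _ (X - C (a τ)) _ ?_ ?_ ?_
      · rw [natDegree_X_sub_C]; omega
      · rw [map_sub, aeval_X, aeval_C]
      · obtain ⟨τ', hτ'⟩ := hnomax τ
        exact ⟨τ', fun ρ' hρ' => by
          rw [eval_sub, eval_X, eval_C]
          exact Kap.gauge_spec hpc hnomax (hτ'.trans_le hρ')⟩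
    rw [hval σ, hval ρ]
    exact Kap.gauge_lt hpc hnomax hρσ
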